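/- For the 21-uniform morphism g5 with g5(0)=001101110001010110010, g5(1)=001101110001001110101, g5(2)=001101110001001101010, and for every squarefree ternary word w of length 4, the image g5(w) is 20-directed. -/
import Mathlib


/-- The 21-uniform morphism `g5`. -/
def g5 : Fin 3 → List (Fin 2)
  | 0 => [0, 0, 1, 1, 0, 1, 1, 1, 0, 0, 0, 1, 0, 1, 0, 1, 1, 0, 0, 1, 0]
  | 1 => [0, 0, 1, 1, 0, 1, 1, 1, 0, 0, 0, 1, 0, 0, 1, 1, 1, 0, 1, 0, 1]
  | 2 => [0, 0, 1, 1, 0, 1, 1, 1, 0, 0, 0, 1, 0, 0, 1, 1, 0, 1, 0, 1, 0]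

/-- A ternary word is squarefree if it contains no nonempty factor `u ++ u`. -/
def Squarefree' {α : Type*} (w : List α) : Prop :=
  ∀ u : List α, u ≠ [] → ¬ (u ++ u) <:+: w

lemma window_of_infix {f L : List (Fin 2)} (h : f <:+: L) :
    ∃ i, i + f.length ≤ L.length ∧ f = (L.drop i).take f.length := by
  obtain ⟨s, t, rfl⟩ := h
  refine ⟨s.length, by simp, ?_⟩
  rw [List.append_assoc, List.drop_left, List.take_left]

lemma key (L : List (Fin 2))
    (h : ∀ i ∈ List.range (L.length - 19), ∀ j ∈ List.range (i + 1),
      (L.drop i).take 20 ≠ ((L.drop j).take 20).reverse) :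
    ∀ f : List (Fin 2), f.length = 20 → f <:+: L → ¬ f.reverse <:+: L := by
  intro f hf h1 h2
  obtain ⟨i, hi, hfi⟩ := window_of_infix h1
  obtain ⟨j, hj, hfj⟩ := window_of_infix h2
  rw [hf] at hfi hi
  rw [List.length_reverse, hf] at hfj hj
  rcases le_or_gt j i with hji | hij
  · refine h i (by simp; omega) j (by simp; omega) ?_
    rw [← hfi, ← hfj, List.reverse_reverse]
  · refine h j (by simp; omega) i (by simp; omega) ?_
    rw [← hfj, ← hfi]

lemma sqfDec {α : Type*} {w : List α} (hw : Squarefree' w) :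
    ∀ i ∈ List.range w.length, ∀ k ∈ List.range w.length,
      ¬ ((w.drop i).take (k+1) ++ (w.drop i).take (k+1)) <:+: w := by
  intro i hi k _ h
  simp only [List.mem_range] at hi
  refine hw _ (fun hnil => ?_) h
  have := congrArg List.length hnil
  simp [List.length_take, List.length_drop] at this
  omega

set_option maxRecDepth 100000 in
set_option maxHeartbeats 4000000 in
/-- For every squarefree ternary word `w` of length 4, the image `g5(w)` is
20-directed: every factor `f` of length 20 of `g5(w)` has `f.reverse` not a
factor of `g5(w)`. -/
theorem stmt_9 (w : List (Fin 3)) (hw : Squarefree' w) (hlen : w.length = 4) :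
    ∀ f : List (Fin 2), f.length = 20 → f <:+: (w.map g5).flatten →
      ¬ f.reverse <:+: (w.map g5).flatten := by
  obtain ⟨a, b, c, d, rfl⟩ : ∃ a b c d, w = [a, b, c, d] := by
    match w, hlen with
    | [a, b, c, d], _ => exact ⟨a, b, c, d, rfl⟩
  fin_cases a <;> fin_cases b <;> fin_cases c <;> fin_cases d <;>
    first
      | exact absurd (sqfDec hw) (by decide)
      | exact key _ (by decide)
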